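/- arXiv:1106.1784 — 4 statements merged into one kernel-verified Lean document; each statement's English description precedes it below -/
import Mathlib

section
/- Let ζ ∈ ℂ be a primitive 5th root of unity and set z = 4 + 3ζ + 12ζ². Then for every integer m ≥ 1 one has z^m ≠ (z̄)^m, where z̄ denotes the complex conjugate of z; equivalently, z/z̄ is not a root of unity. -/
private lemma aux_sum : ∑ x ∈ Finset.range 5, (3 : ZMod 11) ^ x = 0 := by decide

private lemma aux_P : (121 : ZMod 11) = 0 := by decide

private lemma aux_Q : (571 : ZMod 11) = -1 := by decide

private lemma aux_ne : (-1 : ZMod 11) ≠ 0 := by decide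

private instance : Fact (Nat.Prime 11) := ⟨by norm_num⟩

/-- If `ζ` is a primitive 5th root of unity and `z = 4 + 3ζ + 12ζ²`, then for every `m ≥ 1`
one has `z^m ≠ z̄^m`; equivalently, `z/z̄` is not a root of unity. -/
theorem z_pow_ne_conj_z_pow (ζ : ℂ) (hζ : IsPrimitiveRoot ζ 5) :
    ∀ m : ℕ, 1 ≤ m →
      (4 + 3 * ζ + 12 * ζ ^ 2) ^ m ≠ ((starRingEnd ℂ) (4 + 3 * ζ + 12 * ζ ^ 2)) ^ m := by
  intro m hm h
  have hζ0 : ζ ≠ 0 := hζ.ne_zero (by norm_num)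
  have h5 : ζ ^ 5 = 1 := hζ.pow_eq_one
  -- normSq ζ = 1
  have hns : Complex.normSq ζ = 1 := by
    have h1 : Complex.normSq ζ ^ 5 = 1 := by
      rw [← map_pow, h5, map_one]
    have h0 : (0:ℝ) ≤ Complex.normSq ζ := Complex.normSq_nonneg ζ
    nlinarith [sq_nonneg (Complex.normSq ζ - 1), sq_nonneg (Complex.normSq ζ + 1),
      sq_nonneg (Complex.normSq ζ ^ 2 - 1), sq_nonneg (Complex.normSq ζ ^ 2 + Complex.normSq ζ)]
  have hconj : (starRingEnd ℂ) ζ = ζ ^ 4 := by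
    have h1 : ζ * (starRingEnd ℂ) ζ = 1 := by rw [Complex.mul_conj, hns, Complex.ofReal_one]
    have h2 : ζ * ζ ^ 4 = 1 := by rw [← pow_succ']; exact h5
    exact mul_left_cancel₀ hζ0 (h1.trans h2.symm)
  set P : Polynomial ℤ := Polynomial.C 4 + Polynomial.C 3 * Polynomial.X + Polynomial.C 12 * Polynomial.X ^ 2 with hPdef
  set Q : Polynomial ℤ := Polynomial.C 4 + Polynomial.C 12 * Polynomial.X ^ 3 + Polynomial.C 3 * Polynomial.X ^ 4 with hQdef
  have hP : Polynomial.aeval ζ P = 4 + 3 * ζ + 12 * ζ ^ 2 := by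
    simp [hPdef, map_ofNat]
  have hQ : Polynomial.aeval ζ Q = (starRingEnd ℂ) (4 + 3 * ζ + 12 * ζ ^ 2) := by
    simp only [hQdef, map_add, map_mul, map_pow, map_ofNat, Polynomial.aeval_X,
      Polynomial.aeval_C, map_ofNat, hconj]
    linear_combination (-12 * ζ ^ 3) * h5
  have haev : Polynomial.aeval ζ (P ^ m - Q ^ m) = 0 := by
    rw [map_sub, map_pow, map_pow, hP, hQ, h, sub_self]
  have hint : IsIntegral ℤ ζ := hζ.isIntegral (by norm_num)
  have hdvd : minpoly ℤ ζ ∣ P ^ m - Q ^ m := minpoly.isIntegrallyClosed_dvd hint haev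
  rw [← Polynomial.cyclotomic_eq_minpoly hζ (by norm_num)] at hdvd
  -- evaluate at 3 over ZMod 11
  let φ : Polynomial ℤ →+* ZMod 11 := Polynomial.eval₂RingHom (Int.castRingHom (ZMod 11)) 3
  have hdvd2 := map_dvd φ hdvd
  have hcyc : φ (Polynomial.cyclotomic 5 ℤ) = 0 := by
    haveI : Fact (Nat.Prime 5) := ⟨by norm_num⟩
    rw [Polynomial.cyclotomic_prime]
    simp only [φ, Polynomial.coe_eval₂RingHom, Polynomial.eval₂_finset_sum, Polynomial.eval₂_X_pow]
    exact aux_sum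
  rw [hcyc] at hdvd2
  have heq : φ (P ^ m) = φ (Q ^ m) := by
    have h0 := (zero_dvd_iff).mp hdvd2
    rw [map_sub, sub_eq_zero] at h0
    exact h0
  have hφP : φ P = 0 := by
    simp [φ, hPdef]
    exact aux_P
  have hφQ : φ Q = -1 := by
    simp [φ, hQdef]
    exact aux_Q
  rw [map_pow, map_pow, hφP, hφQ, zero_pow (by omega : m ≠ 0)] at heq
  exact pow_ne_zero m aux_ne heq.symm
end

section
/- Let E be the elliptic curve over ℂ with affine Weierstrass equation y² = x³ + x, and let ι : E(ℂ) → E(ℂ) be the map sending the point at infinity O to O and an affine point (x, y) to (−x, i·y). Let P = (x, y) be an affine point of E(ℂ) such that 2•P + ι(P) is again an affine point (x′, y′). Then 5x² + 1 + 2i ≠ 0 and x′ = (3 − 4i)·x·(x² + 1 − 2i)² / (5x² + 1 + 2i)². In other words, the x-coordinate map semiconjugates the isogeny [2+i] to the Lattès map φ(x) = (3−4i)x(x²+1−2i)²/(5x²+1+2i)² on ℙ¹. -/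
open Complex

/-- The elliptic curve `y² = x³ + x` over `ℂ`. -/
noncomputable def Ecurve : WeierstrassCurve.Affine ℂ :=
  { a₁ := 0, a₂ := 0, a₃ := 0, a₄ := 1, a₆ := 0 }

lemma Ecurve_nonsingular_neg_I_mul {x y : ℂ} (h : Ecurve.Nonsingular x y) :
    Ecurve.Nonsingular (-x) (Complex.I * y) := by
  rw [WeierstrassCurve.Affine.nonsingular_iff, WeierstrassCurve.Affine.equation_iff] at h ⊢
  obtain ⟨h1, h2⟩ := h
  simp only [Ecurve] at h1 h2 ⊢
  constructor
  · linear_combination y ^ 2 * Complex.I_sq - h1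
  · rcases h2 with h2 | h2
    · left
      intro hc
      exact h2 (by linear_combination hc)
    · right
      have hy : y ≠ 0 := fun hy0 => h2 (by rw [hy0]; ring)
      intro hc
      have h2I : (2 * Complex.I : ℂ) ≠ 0 := by simp [Complex.I_ne_zero]
      have hzero : (2 * Complex.I) * y = 0 := by linear_combination hc
      rcases mul_eq_zero.mp hzero with h0 | h0
      · exact h2I h0
      · exact hy h0

/-- Complex multiplication by `i` on `E(ℂ)`: `O ↦ O`, `(x, y) ↦ (-x, i·y)`. -/
noncomputable def iotaE : Ecurve.Point → Ecurve.Point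
  | .zero => .zero
  | .some _ _ h => .some _ _ (Ecurve_nonsingular_neg_I_mul h)
/-- The `x`-coordinate semiconjugates `[2+i] = 2·id + ι` to the Lattès map
`φ(x) = (3−4i)x(x²+1−2i)²/(5x²+1+2i)²`. -/
theorem lattes_map_of_two_add_I {x y x' y' : ℂ}
    (h : Ecurve.Nonsingular x y) (h' : Ecurve.Nonsingular x' y')
    (hP : 2 • WeierstrassCurve.Affine.Point.some _ _ h + iotaE (.some _ _ h) = .some _ _ h') :
    5 * x ^ 2 + 1 + 2 * Complex.I ≠ 0 ∧
    x' = (3 - 4 * Complex.I) * x * (x ^ 2 + 1 - 2 * Complex.I) ^ 2 /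
      (5 * x ^ 2 + 1 + 2 * Complex.I) ^ 2 := by
  have e : y ^ 2 = x ^ 3 + x := by
    have hh := h
    rw [WeierstrassCurve.Affine.nonsingular_iff, WeierstrassCurve.Affine.equation_iff] at hh
    obtain ⟨h1, -⟩ := hh
    simp only [Ecurve] at h1
    linear_combination h1
  have hiota : iotaE (.some _ _ h) = .some _ _ (Ecurve_nonsingular_neg_I_mul h) := rfl
  rw [two_nsmul, hiota] at hP
  by_cases hy0 : y = 0
  · subst hy0
    have hyeq : (0:ℂ) = Ecurve.negY x 0 := by
      simp [Ecurve, WeierstrassCurve.Affine.negY]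
    rw [WeierstrassCurve.Affine.Point.add_of_Y_eq rfl hyeq, zero_add] at hP
    injection hP with h1 h2
    have ex : x^3 + x = 0 := by linear_combination -e
    have h0 : x = 0 ∨ x^2+1 = 0 := mul_eq_zero.mp (by linear_combination ex)
    have ha : 5 * x ^ 2 + 1 + 2 * Complex.I ≠ 0 := by
      intro hc
      rcases h0 with h0 | h0
      · rw [h0] at hc; norm_num [Complex.ext_iff] at hc
      · have h4 : (-4:ℂ) + 2*Complex.I = 0 := by linear_combination hc - 5*h0
        norm_num [Complex.ext_iff] at h4
    refine ⟨ha, ?_⟩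
    rw [← h1, eq_div_iff (pow_ne_zero 2 ha)]
    linear_combination ((28-4*Complex.I)*(1-x^2))*ex + (-32*x+16*x*Complex.I-16*x^3)*Complex.I_sq
  · have hyne : y ≠ Ecurve.negY x y := by
      simp only [Ecurve, WeierstrassCurve.Affine.negY]
      intro hc
      apply hy0
      linear_combination hc / 2
    rw [WeierstrassCurve.Affine.Point.add_self_of_Y_ne hyne] at hP
    set S := Ecurve.slope x x y y with hSdef
    set X2 := Ecurve.addX x x S with hX2def
    set Y2 := Ecurve.addY x x y S with hY2def
    have hy2 : (2:ℂ) * y ≠ 0 := by simp [hy0]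
    have hS : S = (3*x^2+1)/(2*y) := by
      rw [hSdef, WeierstrassCurve.Affine.slope_of_Y_ne rfl hyne]
      simp [Ecurve, WeierstrassCurve.Affine.negY]
      try ring
    have hX2v : X2 = S^2 - 2*x := by
      rw [hX2def]
      simp [Ecurve, WeierstrassCurve.Affine.addX]
      try ring
    have hY2v : Y2 = -(S*(X2-x)+y) := by
      rw [hY2def, hX2def]
      simp [Ecurve, WeierstrassCurve.Affine.addY, WeierstrassCurve.Affine.negAddY,
        WeierstrassCurve.Affine.negY]
      try ring
    by_cases hxx : X2 = -x
    · by_cases hyy : Y2 = Ecurve.negY (-x) (Complex.I*y)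
      · rw [WeierstrassCurve.Affine.Point.add_of_Y_eq hxx hyy] at hP
        exact absurd hP.symm (WeierstrassCurve.Affine.Point.some_ne_zero h')
      · rw [WeierstrassCurve.Affine.Point.add_of_Y_ne hyy] at hP
        injection hP with h1 h2
        rw [← hX2def] at h1
        have hns2 : Ecurve.Nonsingular X2 Y2 :=
          WeierstrassCurve.Affine.nonsingular_add h h fun hc => hyne hc.2
        have hnsI : Ecurve.Nonsingular (-x) (Complex.I*y) := Ecurve_nonsingular_neg_I_mul h
        have hyv : Y2 = Complex.I*y :=
          WeierstrassCurve.Affine.Y_eq_of_Y_ne hns2.1 hnsI.1 hxx hyy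
        have hSx : S^2 = x := by linear_combination hxx - hX2v
        have hQ0 : 5*x^4+2*x^2+1 = 0 := by
          have h5 := hSx
          rw [hS] at h5
          field_simp at h5
          linear_combination h5 + 4*x*e
        have hx0 : x ≠ 0 := by
          intro h0
          rw [h0] at hQ0
          norm_num at hQ0
        have h3 : 2*x*S - y = Complex.I*y := by
          linear_combination hyv - hY2v + S*hxx
        have h4 : x*(3*x^2+1) - (1+Complex.I)*y^2 = 0 := by
          have h5 := h3
          rw [hS] at h5
          field_simp at h5
          linear_combination h5
        have hrel : x*((2-Complex.I)*x^2 - Complex.I) = 0 := by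
          linear_combination h4 + (1+Complex.I)*e
        have h5 : (2-Complex.I)*x^2 - Complex.I = 0 := (mul_eq_zero.mp hrel).resolve_left hx0
        have hq : 5*x^2+1-2*Complex.I = 0 := by
          linear_combination (2+Complex.I)*h5 + (x^2+1)*Complex.I_sq
        have ha : 5 * x ^ 2 + 1 + 2 * Complex.I ≠ 0 := by
          intro hc
          have h6 : (4*Complex.I : ℂ) = 0 := by linear_combination hc - hq
          simp [Complex.I_ne_zero] at h6
        refine ⟨ha, ?_⟩
        rw [WeierstrassCurve.Affine.slope_of_Y_ne hxx hyy] at h1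
        simp only [WeierstrassCurve.Affine.addX, WeierstrassCurve.Affine.negY, Ecurve] at h1
        rw [hxx, hyv] at h1
        rw [← h1]
        have hD' : x ^ 2 * 5 + 1 + 2 * Complex.I ≠ 0 := fun hc => ha (by linear_combination hc)
        field_simp
        linear_combination ((-4)*x^1*Complex.I^2 + (96)*x^1*Complex.I^3 + (-80)*x^1*Complex.I^4 + (64)*x^1*Complex.I^5 + (56)*x^3*Complex.I^2 + (240)*x^3*Complex.I^3 + (-64)*x^3*Complex.I^4 + (188)*x^5*Complex.I^2 + (16)*x^5*Complex.I^3)*e + ((1) + (6)*Complex.I^1 + (7632/625)*Complex.I^2 + (10912/625)*Complex.I^3 + (1536/125)*Complex.I^4 + (6912/625)*Complex.I^5 + (2048/625)*Complex.I^6 + (11)*x^2 + (36)*x^2*Complex.I^1 + (3868/125)*x^2*Complex.I^2 + (8824/125)*x^2*Complex.I^3 + (-32/125)*x^2*Complex.I^4 + (1024/125)*x^2*Complex.I^5 + (39)*x^4 + (54)*x^4*Complex.I^1 + (1032/25)*x^4*Complex.I^2 + (328/5)*x^4*Complex.I^3 + (-288/25)*x^4*Complex.I^4 + (45)*x^6 +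 (188/5)*x^6*Complex.I^2 + (16/5)*x^6*Complex.I^3)*hq + ((2368/625)*Complex.I^2 + (4352/625)*Complex.I^3 + (11776/625)*Complex.I^4 + (4096/625)*Complex.I^5)*Complex.I_sq
    · rw [WeierstrassCurve.Affine.Point.add_of_X_ne hxx] at hP
      injection hP with h1 h2
      rw [WeierstrassCurve.Affine.slope_of_X_ne hxx] at h1
      have hQ : 5*x^4+2*x^2+1 ≠ 0 := by
        intro hc
        apply hxx
        rw [hX2v, hS]
        field_simp
        linear_combination hc - 4*x*e
      have ha : 5 * x ^ 2 + 1 + 2 * Complex.I ≠ 0 := by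
        intro hc
        apply hQ
        linear_combination (1/5)*(5*x^2+1-2*Complex.I)*hc + (4/5)*Complex.I_sq
      refine ⟨ha, ?_⟩
      rw [← hSdef, ← hY2def] at h1
      simp only [WeierstrassCurve.Affine.addX, Ecurve] at h1
      have hsub : X2 - -x = (5*x^4+2*x^2+1)/(4*y^2) := by
        rw [hX2v, hS]
        field_simp
        linear_combination (-16*x)*e
      have hYI : Y2 - I*y = (-(3*x^2+1)^3 + 12*x*y^2*(3*x^2+1) - 8*y^4 - 8*I*y^4)/(8*y^3) := by
        rw [hY2v, hX2v, hS]
        field_simp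
        ring
      rw [hsub, hYI, hX2v, hS] at h1
      have hLL : (-(3*x^2+1)^3 + 12*x*y^2*(3*x^2+1) - 8*y^4 - 8*I*y^4) / (8*y^3) /
          ((5*x^4+2*x^2+1)/(4*y^2)) =
          (-(3*x^2+1)^3 + 12*x*y^2*(3*x^2+1) - 8*y^4 - 8*I*y^4) / (2*y*(5*x^4+2*x^2+1)) := by
        field_simp [hQ]
        ring
      rw [hLL] at h1
      rw [← h1]
      have hQ' : x ^ 2 * (x ^ 2 * 5 + 2) + 1 ≠ 0 := fun hc => hQ (by linear_combination hc)
      have hD' : x ^ 2 * 5 + 1 + Complex.I * 2 ≠ 0 := fun hc => ha (by linear_combination hc)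
      field_simp
      linear_combination ((16)*y^2 + (80)*y^2*Complex.I^1 + (128)*y^2*Complex.I^2 + (64)*y^2*Complex.I^3 + (64)*y^6 + (384)*y^6*Complex.I^1 + (832)*y^6*Complex.I^2 + (768)*y^6*Complex.I^3 + (256)*y^6*Complex.I^4 + (-8)*x^1 + (96)*x^1*Complex.I^1 + (-32)*x^1*Complex.I^2 + (128)*x^1*Complex.I^3 + (-128)*x^1*y^4 + (-576)*x^1*y^4*Complex.I^1 + (-704)*x^1*y^4*Complex.I^2 + (256)*x^1*y^4*Complex.I^4 + (320)*x^2*y^2 + (1200)*x^2*y^2*Complex.I^1 + (1344)*x^2*y^2*Complex.I^2 + (576)*x^2*y^2*Complex.I^3 + (256)*x^2*y^2*Complex.I^4 + (640)*x^2*y^6 + (2560)*x^2*y^6*Complex.I^1 + (3200)*x^2*y^6*Complex.I^2 + (1280)*x^2*y^6*Complex.I^3 + (-96)*x^3 + (416)*x^3*Complex.I^1 + (896)*x^3*Complex.I^3 + (256)*x^3*Complex.I^4 + (-1792)*x^3*y^4 + (-5696)*x^3*y^4*Complex.I^1 + (-4416)*x^3*y^4*Complex.I^2 + (-256)*x^3*y^4*Complex.I^3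 + (256)*x^3*y^4*Complex.I^4 + (2656)*x^4*y^2 + (6944)*x^4*y^2*Complex.I^1 + (4672)*x^4*y^2*Complex.I^2 + (1472)*x^4*y^2*Complex.I^3 + (512)*x^4*y^2*Complex.I^4 + (1600)*x^4*y^6 + (3200)*x^4*y^6*Complex.I^1 + (1600)*x^4*y^6*Complex.I^2 + (-1128)*x^5 + (64)*x^5*Complex.I^1 + (-320)*x^5*Complex.I^2 + (2944)*x^5*Complex.I^3 + (768)*x^5*Complex.I^4 + (-8320)*x^5*y^4 + (-16320)*x^5*y^4*Complex.I^1 + (-6720)*x^5*y^4*Complex.I^2 + (1280)*x^5*y^4*Complex.I^3 + (11776)*x^6*y^2 + (19168)*x^6*y^2*Complex.I^1 + (6144)*x^6*y^2*Complex.I^2 + (2752)*x^6*y^2*Complex.I^3 + (256)*x^6*y^2*Complex.I^4 + (-5824)*x^7 + (-3392)*x^7*Complex.I^1 + (-1728)*x^7*Complex.I^2 + (5504)*x^7*Complex.I^3 + (768)*x^7*Complex.I^4 + (-12800)*x^7*y^4 + (-11200)*x^7*y^4*Complex.I^1 + (1600)*x^7*y^4*Complex.I^2 + (28560)*x^8*y^2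 + (22160)*x^8*y^2*Complex.I^1 + (3520)*x^8*y^2*Complex.I^2 + (1280)*x^8*y^2*Complex.I^3 + (-13976)*x^9 + (-8864)*x^9*Complex.I^1 + (-992)*x^9*Complex.I^2 + (5632)*x^9*Complex.I^3 + (256)*x^9*Complex.I^4 + (30400)*x^10*y^2 + (-400)*x^10*y^2*Complex.I^1 + (1600)*x^10*y^2*Complex.I^2 + (-17120)*x^11 + (-8800)*x^11*Complex.I^1 + (3520)*x^11*Complex.I^2 + (1280)*x^11*Complex.I^3 + (-11000)*x^13 + (1600)*x^13*Complex.I^2)*e + ((128)*x^2*Complex.I^1 + (64)*x^4 + (1024)*x^4*Complex.I^1 + (256)*x^4*Complex.I^2 + (256)*x^6 + (3840)*x^6*Complex.I^1 + (1024)*x^6*Complex.I^2 + (192)*x^8 + (8448)*x^8*Complex.I^1 + (1536)*x^8*Complex.I^2 + (768)*x^10 + (11136)*x^10*Complex.I^1 + (1024)*x^10*Complex.I^2 + (4288)*x^12 + (6912)*x^12*Complex.I^1 + (256)*x^12*Complex.I^2 + (5120)*x^14 + (1280)*x^14*Complex.I^1 + (1600)*x^16)*Complex.I_sq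
end

section
/- Let E be the elliptic curve over ℂ with affine Weierstrass equation y² = x³ + x, and let ι : E(ℂ) → E(ℂ) be the map sending the point at infinity O to O and an affine point (x, y) to (−x, i·y). Let P = (x, y) be an affine point of E(ℂ) such that 2•P − ι(P) is again an affine point (x′, y′). Then 5x² + 1 − 2i ≠ 0 and x′ = (3 + 4i)·x·(x² + 1 + 2i)² / (5x² + 1 − 2i)². In other words, the x-coordinate map semiconjugates the isogeny [2−i] to the Lattès map ψ(x) = (3+4i)x(x²+1+2i)²/(5x²+1−2i)² on ℙ¹. -/
open Complex

/-- The `x`-coordinate semiconjugates `[2−i] = 2·id − ι` to the Lattès map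
`ψ(x) = (3+4i)x(x²+1+2i)²/(5x²+1−2i)²`. -/
theorem lattes_map_of_two_sub_I {x y x' y' : ℂ}
    (h : Ecurve.Nonsingular x y) (h' : Ecurve.Nonsingular x' y')
    (hP : 2 • WeierstrassCurve.Affine.Point.some _ _ h - iotaE (.some _ _ h) = .some _ _ h') :
    5 * x ^ 2 + 1 - 2 * Complex.I ≠ 0 ∧
    x' = (3 + 4 * Complex.I) * x * (x ^ 2 + 1 + 2 * Complex.I) ^ 2 /
      (5 * x ^ 2 + 1 - 2 * Complex.I) ^ 2 := by
  classical
  open WeierstrassCurve.Affine in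
  have hE : y ^ 2 = x ^ 3 + x := by
    have := ((WeierstrassCurve.Affine.equation_iff ..).mp h.1)
    simp only [Ecurve] at this
    linear_combination this
  rw [two_nsmul, iotaE, sub_eq_add_neg, WeierstrassCurve.Affine.Point.neg_some] at hP
  have hnegY : ∀ a b : ℂ, Ecurve.negY a b = -b := by
    intro a b; simp [WeierstrassCurve.Affine.negY, Ecurve]
  by_cases hy0 : y = 0
  · rw [WeierstrassCurve.Affine.Point.add_of_Y_eq rfl (by rw [hnegY]; rw [hy0]; ring), zero_add] at hP
    injection hP with h1 h2
    -- h1 : -x = x'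
    have hx3 : x ^ 3 + x = 0 := by rw [hy0] at hE; linear_combination -hE
    have hfac : x * (x ^ 2 + 1) = 0 := by linear_combination hx3
    rcases mul_eq_zero.mp hfac with h0 | h0
    · subst h0
      constructor
      · intro hc
        have h2 := congrArg Complex.im hc
        simp at h2
      · rw [← h1]; ring
    · have hx2 : x ^ 2 = -1 := by linear_combination h0
      have hd : 5 * x ^ 2 + 1 - 2 * Complex.I = -4 - 2 * Complex.I := by rw [hx2]; ring
      constructor
      · rw [hd]; intro hc
        have h3 := congrArg Complex.im hc
        simp at h3
      · rw [← h1, hd]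
        have h2i : x ^ 2 + 1 + 2 * Complex.I = 2 * Complex.I := by rw [hx2]; ring
        rw [h2i]
        have hne : ((-4 - 2*Complex.I)^2 : ℂ) ≠ 0 := by
          apply pow_ne_zero
          intro hc
          have h3 := congrArg Complex.im hc
          simp at h3
        rw [eq_div_iff hne]
        linear_combination (-16*x*(Complex.I+1)) * Complex.I_sq
  · have hyne : y ≠ Ecurve.negY x y := by rw [hnegY]; intro hc; exact hy0 (by linear_combination hc/2)
    rw [WeierstrassCurve.Affine.Point.add_of_Y_ne hyne] at hP
    have h2y : (2*y : ℂ) ≠ 0 := by simpa using hy0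
    have hL : Ecurve.slope x x y y = (3*x^2+1)/(2*y) := by
      rw [WeierstrassCurve.Affine.slope_of_Y_ne rfl hyne]
      rw [hnegY]
      simp only [Ecurve]
      congr 1 <;> ring
    have hX2 : Ecurve.addX x x (Ecurve.slope x x y y) = ((3*x^2+1)/(2*y))^2 - 2*x := by
      rw [WeierstrassCurve.Affine.addX, hL]
      simp only [Ecurve]
      ring
    have hY2 : Ecurve.addY x x y (Ecurve.slope x x y y) =
        -(((3*x^2+1)/(2*y)) * ((((3*x^2+1)/(2*y))^2 - 2*x) - x) + y) := by
      rw [WeierstrassCurve.Affine.addY, WeierstrassCurve.Affine.negAddY, hnegY, hX2, hL]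
    have hNegY2 : Ecurve.negY (-x) (Complex.I*y) = -(Complex.I*y) := hnegY _ _
    by_cases hxx : Ecurve.addX x x (Ecurve.slope x x y y) = -x
    · have hxv : ((3*x^2+1)/(2*y))^2 - 2*x = -x := by rw [← hX2]; exact hxx
      have hq : 5*x^4 + 2*x^2 + 1 = 0 := by
        have h2 := hxv
        field_simp at h2
        linear_combination h2 + 4*x*hE
      have hfac : (5*x^2+1-2*Complex.I)*(5*x^2+1+2*Complex.I) = 0 := by
        linear_combination 5*hq - 4*Complex.I_sq
      rcases mul_eq_zero.mp hfac with hc | hc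
      · exfalso
        have hyeq : Ecurve.addY x x y (Ecurve.slope x x y y) =
            Ecurve.negY (-x) (Ecurve.negY (-x) (Complex.I*y)) := by
          rw [hY2, hxv, hnegY, hnegY]
          field_simp
          linear_combination (-2-2*Complex.I)*hE + (-4/5*x)*Complex.I_sq + (4/5*x - 2/5*x*Complex.I)*hc
        rw [WeierstrassCurve.Affine.Point.add_of_Y_eq hxx hyeq] at hP
        exact WeierstrassCurve.Affine.Point.some_ne_zero h' hP.symm
      · have hden : 5*x^2+1-2*Complex.I ≠ 0 := by
          intro hd
          have h4 : (4:ℂ)*Complex.I = 0 := by linear_combination hc - hd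
          simp [Complex.I_ne_zero] at h4
        refine ⟨hden, ?_⟩
        have hY2v : Ecurve.addY x x y (Ecurve.slope x x y y) = -(Complex.I*y) := by
          rw [hY2, hxv]
          field_simp
          linear_combination (-2+2*Complex.I)*hE + (-4/5*x)*Complex.I_sq + (4/5*x + 2/5*x*Complex.I)*hc
        have hyne2 : Ecurve.addY x x y (Ecurve.slope x x y y) ≠
            Ecurve.negY (-x) (Ecurve.negY (-x) (Complex.I*y)) := by
          rw [hY2v, hnegY, hnegY]
          intro hk
          have h2I : (2:ℂ)*Complex.I*y = 0 := by linear_combination -hk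
          rcases mul_eq_zero.mp h2I with h0 | h0
          · rcases mul_eq_zero.mp h0 with h00 | h00
            · norm_num at h00
            · exact Complex.I_ne_zero h00
          · exact hy0 h0
        rw [WeierstrassCurve.Affine.Point.add_of_Y_ne hyne2] at hP
        injection hP with h1 h2
        rw [WeierstrassCurve.Affine.slope_of_Y_ne hxx hyne2] at h1
        rw [WeierstrassCurve.Affine.addX, hxx, hY2v, hnegY] at h1
        simp only [Ecurve] at h1
        rw [← h1]
        have hIy : (-(Complex.I*y) - - -(Complex.I*y)) ≠ 0 := by
          intro hk
          have h2I : (2:ℂ)*Complex.I*y = 0 := by linear_combination -hk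
          rcases mul_eq_zero.mp h2I with h0 | h0
          · rcases mul_eq_zero.mp h0 with h00 | h00
            · norm_num at h00
            · exact Complex.I_ne_zero h00
          · exact hy0 h0
        have hIy2 : (-(Complex.I*y) - Complex.I*y) ≠ 0 := by
          intro hk; exact hIy (by linear_combination hk)
        have hden' : x ^ 2 * 5 + 1 - 2 * I ≠ 0 := by intro hk; exact hden (by linear_combination hk)
        field_simp [hIy, hIy2, hden, hden']
        linear_combination ((-4*x*Complex.I^2) + (-96*x*Complex.I^3) + (-80*x*Complex.I^4) + (-64*x*Complex.I^5) + (56*x^3*Complex.I^2) + (-240*x^3*Complex.I^3) + (-64*x^3*Complex.I^4) + (188*x^5*Complex.I^2) + (-16*x^5*Complex.I^3)) * hE + ((16/5) + (236/5*x^2) + (-32*x^2*Complex.I) + (-80*x^2*Complex.I^2) + (-64*x^2*Complex.I^3) + (1044/5*x^4) + (-272*x^4*Complex.I) + (-144*x^4*Complex.I^2) + (-64*x^4*Complex.I^3) + (1508/5*x^6) + (-256*x^6*Complex.I) + (-64*x^6*Complex.I^2) + (188*x^8) + (-16*x^8*Complex.I)) * Complex.I_sq + ((-11/5) + (2/5*Complex.I)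 + (-101/5*x^2) + (132/5*x^2*Complex.I) + (-69/5*x^4) + (58/5*x^4*Complex.I) + (37/5*x^6) + (16/5*x^6*Complex.I)) * hc
    · have hxxv : ((3*x^2+1)/(2*y))^2 - 2*x + x ≠ 0 := by
        rw [hX2] at hxx
        intro hq
        exact hxx (by linear_combination hq)
      have hs1 : (3*x^2+1)^2 - 4*x*y^2 ≠ 0 := by
        intro hq
        apply hxxv
        field_simp
        linear_combination hq
      have hquart : 5*x^4 + 2*x^2 + 1 ≠ 0 := by
        intro hq
        exact hs1 (by linear_combination hq - 4*x*hE)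
      have hden : 5*x^2 + 1 - 2*Complex.I ≠ 0 := by
        intro hc
        exact hquart (by linear_combination ((5*x^2+1+2*Complex.I)/5) * hc + (4/5)*Complex.I_sq)
      refine ⟨hden, ?_⟩
      rw [WeierstrassCurve.Affine.Point.add_of_X_ne hxx] at hP
      injection hP with h1 h2
      rw [WeierstrassCurve.Affine.addX, WeierstrassCurve.Affine.slope_of_X_ne hxx,
        hX2, hY2, hNegY2] at h1
      simp only [Ecurve] at h1
      have hxxv2 : ((3*x^2+1)/(2*y))^2 - 2*x - -x ≠ 0 := by
        intro hq; exact hxxv (by linear_combination hq)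
      have hSne : (2*y*((3*x^2+1)^2 - 4*x*y^2) : ℂ) ≠ 0 := mul_ne_zero h2y hs1
      have hslope2val :
          (-((3*x^2+1)/(2*y) * (((3*x^2+1)/(2*y))^2 - 2*x - x) + y) - -(Complex.I*y)) /
              (((3*x^2+1)/(2*y))^2 - 2*x - -x) =
            (-((3*x^2+1)^3) + 12*(3*x^2+1)*x*y^2 + 8*(Complex.I-1)*y^4) /
              (2*y*((3*x^2+1)^2 - 4*x*y^2)) := by
        rw [div_eq_div_iff hxxv2 hSne]
        field_simp
        ring
      have hll : ((3*x^2+1)/(2*y))^2 = (3*x^2+1)^2/(4*y^2) := by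
        rw [div_pow]; congr 1; ring
      rw [← h1, hslope2val, hll]
      have h4y : (4*y^2 : ℂ) ≠ 0 := by simpa using hy0
      have hdenp : ((5*x^2+1-2*Complex.I)^2 : ℂ) ≠ 0 := pow_ne_zero _ hden
      have hden' : x ^ 2 * 5 + 1 - I * 2 ≠ 0 := by intro hk; exact hden (by linear_combination hk)
      have hs1' : (3 * x ^ 2 + 1) ^ 2 - x * y ^ 2 * 4 ≠ 0 := by intro hk; exact hs1 (by linear_combination hk)
      field_simp [hSne, hden, hden', hs1']
      linear_combination ((-512*x*Complex.I) + (-512*x*Complex.I^3) + (256*x^3) + (-3584*x^3*Complex.I) + (1280*x^3*Complex.I^2) + (-3584*x^3*Complex.I^3) + (1024*x^3*Complex.I^4) + (768*x^5) + (-11776*x^5*Complex.I) + (3840*x^5*Complex.I^2) + (-11776*x^5*Complex.I^3) + (3072*x^5*Complex.I^4) + (-22016*x^7*Complex.I) + (3072*x^7*Complex.I^2) + (-22016*x^7*Complex.I^3) + (3072*x^7*Complex.I^4) + (3072*x^9) + (-22528*x^9*Complex.I) + (4096*x^9*Complex.I^2) + (-22528*x^9*Complex.I^3) + (1024*x^9*Complex.I^4)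 + (14080*x^11) + (-5120*x^11*Complex.I) + (14080*x^11*Complex.I^2) + (-5120*x^11*Complex.I^3) + (6400*x^13) + (6400*x^13*Complex.I^2) + (64*y^2) + (-320*y^2*Complex.I) + (512*y^2*Complex.I^2) + (-256*y^2*Complex.I^3) + (1216*x^2*y^2) + (-960*x^2*y^2*Complex.I) + (7168*x^2*y^2*Complex.I^2) + (-256*x^2*y^2*Complex.I^3) + (1024*x^2*y^2*Complex.I^4) + (6528*x^4*y^2) + (-384*x^4*y^2*Complex.I) + (27392*x^4*y^2*Complex.I^2) + (2304*x^4*y^2*Complex.I^3) + (2048*x^4*y^2*Complex.I^4) + (19584*x^6*y^2) + (-128*x^6*y^2*Complex.I) + (44800*x^6*y^2*Complex.I^2) + (3328*x^6*y^2*Complex.I^3) + (1024*x^6*y^2*Complex.I^4) + (40512*x^8*y^2) + (-3392*x^8*y^2*Complex.I) + (28416*x^8*y^2*Complex.I^2) + (-5120*x^8*y^2*Complex.I^3) + (42688*x^10*y^2) + (5184*x^10*y^2*Complex.I) + (6400*x^10*y^2*Complex.I^2) + (-512*x*y^4) + (2304*x*y^4*Complex.I) + (-2816*x*y^4*Complex.I^2)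 + (1024*x*y^4*Complex.I^4) + (-7168*x^3*y^4) + (15616*x^3*y^4*Complex.I) + (-21760*x^3*y^4*Complex.I^2) + (-3072*x^3*y^4*Complex.I^3) + (1024*x^3*y^4*Complex.I^4) + (-27136*x^5*y^4) + (44800*x^5*y^4*Complex.I) + (-30976*x^5*y^4*Complex.I^2) + (-5120*x^5*y^4*Complex.I^3) + (-32768*x^7*y^4) + (43776*x^7*y^4*Complex.I) + (6400*x^7*y^4*Complex.I^2) + (256*y^6) + (-1536*y^6*Complex.I) + (3328*y^6*Complex.I^2) + (-3072*y^6*Complex.I^3) + (1024*y^6*Complex.I^4) + (2560*x^2*y^6) + (-10240*x^2*y^6*Complex.I) + (12800*x^2*y^6*Complex.I^2) + (-5120*x^2*y^6*Complex.I^3) + (6400*x^4*y^6) + (-12800*x^4*y^6*Complex.I) + (6400*x^4*y^6*Complex.I^2)) * hE + ((-512*x^2*Complex.I) + (256*x^4) + (-4096*x^4*Complex.I) + (1024*x^4*Complex.I^2) + (1024*x^6) + (-15360*x^6*Complex.I) + (4096*x^6*Complex.I^2) + (768*x^8) + (-33792*x^8*Complex.I) + (6144*x^8*Complex.I^2) +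 (3072*x^10) + (-44544*x^10*Complex.I) + (4096*x^10*Complex.I^2) + (17152*x^12) + (-27648*x^12*Complex.I) + (1024*x^12*Complex.I^2) + (20480*x^14) + (-5120*x^14*Complex.I) + (6400*x^16)) * Complex.I_sq
end

section
/- Let E be the elliptic curve over ℂ with affine Weierstrass equation y² = x³ + x, and let ι : E(ℂ) → E(ℂ) be the map sending the point at infinity O to O and an affine point (x, y) to (−x, i·y). If P = (x, y) is an affine point of E(ℂ) whose x-coordinate satisfies 5x² + 1 + 2i = 0, then 2•P + ι(P) = O; that is, the four affine points of E(ℂ) lying over the roots of 5x² + 1 + 2i are exactly the non-trivial points of the kernel of the isogeny [2+i] = 2·id + ι. -/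
open Complex

/-- Affine points whose `x`-coordinate satisfies `5x² + 1 + 2i = 0` lie in the kernel
of the isogeny `[2+i] = 2·id + ι`. -/
theorem root_of_denominator_in_ker {x y : ℂ} (h : Ecurve.Nonsingular x y)
    (hx : 5 * x ^ 2 + 1 + 2 * Complex.I = 0) :
    2 • WeierstrassCurve.Affine.Point.some _ _ h + iotaE (.some _ _ h) = 0 := by
  have heq : y ^ 2 = x ^ 3 + x := by
    have h1 := ((WeierstrassCurve.Affine.nonsingular_iff x y).mp h).1
    rw [WeierstrassCurve.Affine.equation_iff] at h1
    simp only [Ecurve] at h1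
    linear_combination h1
  have hII : Complex.I ^ 2 = -1 := Complex.I_sq
  have hy : y ≠ 0 := by
    intro hy0
    have hx2 : x ^ 2 = -(1 + 2 * Complex.I) / 5 := by linear_combination hx / 5
    have hz : x * (x ^ 2 + 1) = 0 := by
      rw [hy0] at heq; linear_combination -heq
    rcases mul_eq_zero.mp hz with h0 | h0
    · rw [h0] at hx
      have := congrArg Complex.im hx
      simp at this
    · rw [hx2] at h0
      have := congrArg Complex.im h0
      simp at this
  have hne : y ≠ Ecurve.negY x y := by
    simp only [WeierstrassCurve.Affine.negY, Ecurve, mul_zero, zero_mul, sub_zero, zero_sub]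
    intro hc
    exact hy (by linear_combination hc / 2)
  rw [two_nsmul, WeierstrassCurve.Affine.Point.add_self_of_Y_ne hne]
  show _ + WeierstrassCurve.Affine.Point.some _ _ (Ecurve_nonsingular_neg_I_mul h) = 0
  have hnegY : Ecurve.negY x y = -y := by
    simp [WeierstrassCurve.Affine.negY, Ecurve]
  have hslope : Ecurve.slope x x y y = (3 * x ^ 2 + 1) / (2 * y) := by
    rw [WeierstrassCurve.Affine.slope_of_Y_ne rfl hne, hnegY]
    simp only [Ecurve]
    ring_nf
  have h2y : (2 : ℂ) * y ≠ 0 := by simp [hy]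
  have hL2 : (3 * x ^ 2 + 1) ^ 2 = x * (2 * y) ^ 2 := by
    linear_combination -4 * x * heq + (x ^ 2 + (1 - 2 * Complex.I) / 5) * hx + (4 / 5) * hII
  have hL : Ecurve.slope x x y y ^ 2 = x := by
    rw [hslope, div_pow, div_eq_iff (pow_ne_zero 2 h2y)]
    linear_combination hL2
  have haddX : Ecurve.addX x x (Ecurve.slope x x y y) = -x := by
    rw [WeierstrassCurve.Affine.addX]
    have ha1 : Ecurve.a₁ = 0 := rfl
    have ha2 : Ecurve.a₂ = 0 := rfl
    rw [ha1, ha2]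
    linear_combination hL
  have hkey : (3 * x ^ 2 + 1) * x = (1 - Complex.I) * y ^ 2 := by
    linear_combination (-1 + Complex.I) * heq + (2 + Complex.I) * x / 5 * hx -
      (2 / 5) * x * hII
  have hinner : Ecurve.slope x x y y * (-x - x) + y = Complex.I * y := by
    rw [hslope]
    field_simp
    linear_combination -2 * hkey
  have haddY : Ecurve.addY x x y (Ecurve.slope x x y y) =
      Ecurve.negY (-x) (Complex.I * y) := by
    rw [WeierstrassCurve.Affine.addY, WeierstrassCurve.Affine.negAddY, haddX, hinner]
  exact WeierstrassCurve.Affine.Point.add_of_Y_eq haddX haddY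
end
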